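/- If the intersection ⋂_{i=1}^{n} L[M_i] is nonempty, then Syn(𝒜) = I ∪ I_3 ∪ I_4, where I_3 = { w z : w ∈ ⋂_{i=1}^{n} L[M_i] and δ_i(Q_i,w) ⊆ F_i for all i } and I_4 = { u x w z : u ∈ (Σ∪{x})*, w ∈ ⋂_{i=1}^{n} L[M_i] }. -/

import Mathlib

/-- The transition function of a DFA extended to words (read left to right). -/
def deltaStar {Q A : Type} (δ : Q → A → Q) (q : Q) (w : List A) : Q :=
  w.foldl δ q

/-- `w` is a reset word for the DFA with transition function `δ`. -/
def IsReset {Q A : Type} (δ : Q → A → Q) (w : List A) : Prop :=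
  ∀ q q' : Q, deltaStar δ q w = deltaStar δ q' w

/-- The set of reset words of a DFA. -/
def Syn {Q A : Type} (δ : Q → A → Q) : Set (List A) :=
  {w | IsReset δ w}

/-- The alphabet Δ = Σ ∪ {x,y,z}: `Sum.inl a` is a letter of Σ, and
`Sum.inr 0`, `Sum.inr 1`, `Sum.inr 2` are the new letters x, y, z. -/
abbrev Alph (σ : Type) : Type := σ ⊕ Fin 3

def xL {σ : Type} : Alph σ := Sum.inr 0
def yL {σ : Type} : Alph σ := Sum.inr 1
def zL {σ : Type} : Alph σ := Sum.inr 2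

/-- The state set Q of the DFA 𝒜: the disjoint union of the state sets `Qst i`
of the DFAs `M i`, together with two new states: `Sum.inr false` is the sink `s`
and `Sum.inr true` is the state `h`. -/
abbrev StA {n : ℕ} (Qst : Fin n → Type) : Type := (Σ i, Qst i) ⊕ Bool

def sA {n : ℕ} {Qst : Fin n → Type} : StA Qst := Sum.inr false
def hA {n : ℕ} {Qst : Fin n → Type} : StA Qst := Sum.inr true

/-- The transition function φ of the DFA 𝒜. -/
def phi {n : ℕ} {σ : Type} {Qst : Fin n → Type}
    (δi : ∀ i, Qst i → σ → Qst i) (qinit : ∀ i, Qst i)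
    (Fi : ∀ i, Set (Qst i)) [∀ i, DecidablePred (· ∈ Fi i)] :
    StA Qst → Alph σ → StA Qst
  | Sum.inl ⟨i, q⟩, Sum.inl a => Sum.inl ⟨i, δi i q a⟩
  | Sum.inl ⟨i, q⟩, Sum.inr k =>
      if k = 0 then Sum.inl ⟨i, qinit i⟩          -- φ(q, x) = qᵢ
      else if k = 1 then sA                        -- φ(q, y) = s
      else if q ∈ Fi i then sA else hA             -- φ(q, z) = s on Fᵢ, h off Fᵢ
  | Sum.inr _, _ => sA                             -- φ(s,·) = φ(h,·) = s

/-- The language accepted by the DFA `M i = ⟨Qst i, σ, δi i, qinit i, Fi i⟩`. -/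
def LM {n : ℕ} {σ : Type} {Qst : Fin n → Type}
    (δi : ∀ i, Qst i → σ → Qst i) (qinit : ∀ i, Qst i)
    (Fi : ∀ i, Set (Qst i)) (i : Fin n) : Set (List σ) :=
  {w | deltaStar (δi i) (qinit i) w ∈ Fi i}

/-- `w ∈ (Σ ∪ {x})*`, i.e. `w` contains no occurrence of the letters y and z. -/
def noYZ {σ : Type} (w : List (Alph σ)) : Prop := yL ∉ w ∧ zL ∉ w

/-- L₁ = (Σ∪{x})* y Δ* -/
def L1 {σ : Type} : Set (List (Alph σ)) :=
  {w | ∃ u v, noYZ u ∧ w = u ++ yL :: v}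

/-- L₂ = (Σ∪{x})* z Δ⁺ -/
def L2 {σ : Type} : Set (List (Alph σ)) :=
  {w | ∃ u v, noYZ u ∧ v ≠ [] ∧ w = u ++ zL :: v}

/-- The ideal language I = L₁ ∪ L₂. -/
def ISet {σ : Type} : Set (List (Alph σ)) := L1 ∪ L2

section Aux
variable {n : ℕ} {σ : Type} {Qst : Fin n → Type}
  (δi : ∀ i, Qst i → σ → Qst i) (qinit : ∀ i, Qst i)
  (Fi : ∀ i, Set (Qst i)) [∀ i, DecidablePred (· ∈ Fi i)]

lemma deltaStar_nil {Q A : Type} (δ : Q → A → Q) (q : Q) : deltaStar δ q [] = q := rfl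
lemma deltaStar_cons {Q A : Type} (δ : Q → A → Q) (q : Q) (a : A) (w : List A) :
    deltaStar δ q (a :: w) = deltaStar δ (δ q a) w := rfl
lemma deltaStar_append {Q A : Type} (δ : Q → A → Q) (q : Q) (u v : List A) :
    deltaStar δ q (u ++ v) = deltaStar δ (deltaStar δ q u) v := List.foldl_append ..

/-- in-component transition with x -/
def dComp (i : Fin n) (q : Qst i) : Alph σ → Qst i
  | Sum.inl a => δi i q a
  | Sum.inr _ => qinit i

lemma sink_all (w : List (Alph σ)) :
    deltaStar (phi δi qinit Fi) (sA : StA Qst) w = sA := by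
  induction w with
  | nil => rfl
  | cons a w ih => rw [deltaStar_cons]; exact ih

lemma sink_ne (w : List (Alph σ)) (hw : w ≠ []) (b : Bool) :
    deltaStar (phi δi qinit Fi) (Sum.inr b) w = sA := by
  cases w with
  | nil => exact absurd rfl hw
  | cons a w =>
    rw [deltaStar_cons]
    have hs : phi δi qinit Fi (Sum.inr b) a = sA := rfl
    rw [hs]; exact sink_all δi qinit Fi w

lemma step_y (i : Fin n) (q : Qst i) :
    phi δi qinit Fi (Sum.inl ⟨i, q⟩) yL = sA := rfl

lemma step_x (i : Fin n) (q : Qst i) :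
    phi δi qinit Fi (Sum.inl ⟨i, q⟩) xL = Sum.inl ⟨i, qinit i⟩ := rfl

lemma step_z (i : Fin n) (q : Qst i) :
    phi δi qinit Fi (Sum.inl ⟨i, q⟩) zL = if q ∈ Fi i then sA else hA := rfl

lemma comp_run (i : Fin n) (u : List (Alph σ)) (hu : noYZ u) (q : Qst i) :
    deltaStar (phi δi qinit Fi) (Sum.inl ⟨i, q⟩) u
      = Sum.inl ⟨i, deltaStar (dComp δi qinit i) q u⟩ := by
  induction u generalizing q with
  | nil => rfl
  | cons c u ih =>
    obtain ⟨hy, hz⟩ := hu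
    simp only [List.mem_cons, not_or] at hy hz
    rw [deltaStar_cons, deltaStar_cons]
    have hrec := ih ⟨hy.2, hz.2⟩
    cases c with
    | inl a => exact hrec _
    | inr k =>
      have hk : k = 0 := by
        have h1 : k ≠ 1 := fun h => hy.1 (by rw [h]; rfl)
        have h2 : k ≠ 2 := fun h => hz.1 (by rw [h]; rfl)
        omega
      subst hk
      have h1 : phi δi qinit Fi (Sum.inl ⟨i, q⟩) (Sum.inr 0) = Sum.inl ⟨i, qinit i⟩ := rfl
      have h2 : dComp δi qinit i q (Sum.inr 0) = qinit i := rfl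
      rw [h1, h2]
      exact hrec _

lemma map_run (i : Fin n) (w' : List σ) (q : Qst i) :
    deltaStar (dComp δi qinit i) q (w'.map Sum.inl) = deltaStar (δi i) q w' := by
  induction w' generalizing q with
  | nil => rfl
  | cons a w ih => rw [List.map_cons, deltaStar_cons, deltaStar_cons]; exact ih _

lemma map_noYZ (w' : List σ) : noYZ (w'.map Sum.inl : List (Alph σ)) := by
  constructor <;> simp [yL, zL]

lemma decomp_yz (w : List (Alph σ)) :
    noYZ w ∨ ∃ u c v, noYZ u ∧ (c = (yL : Alph σ) ∨ c = zL) ∧ w = u ++ c :: v := by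
  induction w with
  | nil => left; exact ⟨by simp, by simp⟩
  | cons a w ih =>
    by_cases ha : a = (yL : Alph σ) ∨ a = zL
    · right; exact ⟨[], a, w, ⟨by simp, by simp⟩, ha, rfl⟩
    · push_neg at ha
      rcases ih with h | ⟨u, c, v, hu, hc, rfl⟩
      · left
        refine ⟨fun hm => ?_, fun hm => ?_⟩ <;> rcases List.mem_cons.mp hm with hq | hq
        · exact ha.1 hq.symm
        · exact h.1 hq
        · exact ha.2 hq.symm
        · exact h.2 hq
      · right
        refine ⟨a :: u, c, v, ⟨fun hm => ?_, fun hm => ?_⟩, hc, rfl⟩ <;>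
          rcases List.mem_cons.mp hm with hq | hq
        · exact ha.1 hq.symm
        · exact hu.1 hq
        · exact ha.2 hq.symm
        · exact hu.2 hq

lemma decomp_x (u : List (Alph σ)) (hu : noYZ u) :
    (∃ w' : List σ, u = w'.map Sum.inl) ∨
    (∃ (u1 : List (Alph σ)) (w' : List σ), noYZ u1 ∧ u = u1 ++ xL :: w'.map Sum.inl) := by
  induction u using List.reverseRecOn with
  | nil => left; exact ⟨[], rfl⟩
  | append_singleton t c ih =>
    have ht : noYZ t := ⟨fun h => hu.1 (by simp [h]), fun h => hu.2 (by simp [h])⟩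
    cases c with
    | inl a =>
      rcases ih ht with ⟨w', rfl⟩ | ⟨u1, w', hu1, rfl⟩
      · left; exact ⟨w' ++ [a], by simp⟩
      · right; exact ⟨u1, w' ++ [a], hu1, by simp⟩
    | inr k =>
      have hk : k = 0 := by
        have h1 : k ≠ 1 := fun h => hu.1 (by rw [h]; exact List.mem_append_right _ (by simp [yL]))
        have h2 : k ≠ 2 := fun h => hu.2 (by rw [h]; exact List.mem_append_right _ (by simp [zL]))
        omega
      subst hk
      right; exact ⟨t, [], ht, by simp [xL]⟩

end Aux

/-- If ⋂ᵢ L[Mᵢ] ≠ ∅ then Syn(𝒜) = I ∪ I₃ ∪ I₄. -/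
theorem syn_A_eq_I_union_I3_I4
    (n : ℕ) (hn : 0 < n) (σ : Type) [Fintype σ]
    (Qst : Fin n → Type) [∀ i, Fintype (Qst i)]
    (δi : ∀ i, Qst i → σ → Qst i) (qinit : ∀ i, Qst i)
    (Fi : ∀ i, Set (Qst i)) [∀ i, DecidablePred (· ∈ Fi i)]
    (hno : ∀ i (q : Qst i) (a : σ), δi i q a ≠ qinit i)
    (hqF : ∀ i, qinit i ∉ Fi i)
    (hne : (⋂ i, LM δi qinit Fi i).Nonempty) :
    Syn (phi δi qinit Fi) =
      ISet ∪
      {w : List (Alph σ) | ∃ w' : List σ,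
          (∀ i, w' ∈ LM δi qinit Fi i) ∧
          (∀ i (q : Qst i), deltaStar (δi i) q w' ∈ Fi i) ∧
          w = w'.map Sum.inl ++ [zL]} ∪
      {w : List (Alph σ) | ∃ (u : List (Alph σ)) (w' : List σ),
          noYZ u ∧ (∀ i, w' ∈ LM δi qinit Fi i) ∧
          w = u ++ xL :: (w'.map Sum.inl ++ [zL])} := by
  ext w
  simp only [Set.mem_union, ISet, L1, L2, Set.mem_setOf_eq, Syn, IsReset]
  constructor
  · intro hw
    have hall : ∀ q : StA Qst, deltaStar (phi δi qinit Fi) q w = sA := fun q =>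
      (hw q sA).trans (sink_all δi qinit Fi w)
    rcases decomp_yz w with hno | ⟨u, c, v, hu, hc, rfl⟩
    · exfalso
      have h := hall (Sum.inl ⟨⟨0, hn⟩, qinit ⟨0, hn⟩⟩)
      rw [comp_run δi qinit Fi _ w hno] at h
      simp [sA] at h
    · rcases hc with rfl | rfl
      · exact Or.inl (Or.inl (Or.inl ⟨u, v, hu, rfl⟩))
      · cases v with
        | cons v0 v' => exact Or.inl (Or.inl (Or.inr ⟨u, v0 :: v', hu, by simp, rfl⟩))
        | nil =>
          have hF : ∀ i (q : Qst i), deltaStar (dComp δi qinit i) q u ∈ Fi i := by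
            intro i q
            have h := hall (Sum.inl ⟨i, q⟩)
            rw [deltaStar_append, comp_run δi qinit Fi i u hu, deltaStar_cons, step_z] at h
            by_contra hcon
            rw [if_neg hcon] at h
            exact absurd h (by simp [deltaStar, hA, sA])
          rcases decomp_x u hu with ⟨w', rfl⟩ | ⟨u1, w', hu1, rfl⟩
          · have hAll : ∀ i (q : Qst i), deltaStar (δi i) q w' ∈ Fi i := fun i q => by
              have h := hF i q; rwa [map_run] at h
            exact Or.inl (Or.inr ⟨w', fun i => hAll i (qinit i), hAll, rfl⟩)
          · refine Or.inr ⟨u1, w', hu1, fun i => ?_, by simp⟩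
            have h := hF i (qinit i)
            rw [show u1 ++ xL :: List.map Sum.inl w' = (u1 ++ [xL]) ++ List.map Sum.inl w'
                by simp, deltaStar_append, map_run] at h
            rwa [show deltaStar (dComp δi qinit i) (qinit i) (u1 ++ [xL]) = qinit i from by
              rw [deltaStar_append]; rfl] at h
  · intro hw q q'
    suffices hall : ∀ p : StA Qst, deltaStar (phi δi qinit Fi) p w = sA by
      rw [hall q, hall q']
    intro p
    rcases hw with ((⟨u, v, hu, rfl⟩ | ⟨u, v, hu, hv, rfl⟩) | ⟨w', hLM, hAll, rfl⟩) |
      ⟨u, w', hu, hLM, rfl⟩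
    · cases p with
      | inr b => exact sink_ne δi qinit Fi _ (by simp) b
      | inl p =>
        obtain ⟨i, qq⟩ := p
        rw [deltaStar_append, comp_run δi qinit Fi i u hu, deltaStar_cons, step_y]
        exact sink_all δi qinit Fi v
    · cases p with
      | inr b => exact sink_ne δi qinit Fi _ (by simp) b
      | inl p =>
        obtain ⟨i, qq⟩ := p
        rw [deltaStar_append, comp_run δi qinit Fi i u hu, deltaStar_cons, step_z]
        by_cases hmem : deltaStar (dComp δi qinit i) qq u ∈ Fi i
        · rw [if_pos hmem]; exact sink_all δi qinit Fi v
        · rw [if_neg hmem]; exact sink_ne δi qinit Fi v hv true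
    · cases p with
      | inr b => exact sink_ne δi qinit Fi _ (by simp) b
      | inl p =>
        obtain ⟨i, qq⟩ := p
        rw [deltaStar_append, comp_run δi qinit Fi i _ (map_noYZ w'), map_run,
          deltaStar_cons, step_z, if_pos (hAll i qq)]
        rfl
    · cases p with
      | inr b => exact sink_ne δi qinit Fi _ (by simp) b
      | inl p =>
        obtain ⟨i, qq⟩ := p
        rw [deltaStar_append, comp_run δi qinit Fi i u hu, deltaStar_cons, step_x,
          deltaStar_append, comp_run δi qinit Fi i _ (map_noYZ w'), map_run,
          deltaStar_cons, step_z, if_pos (show deltaStar (δi i) (qinit i) w' ∈ Fi i from hLM i)]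
        rfl
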